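/- Let F_q be a finite field with q elements where q ≡ 3 (mod 4) and q > 3, of characteristic p. Let a_1,...,a_{(q-1)/2} be all nonzero squares in F_q. Then det[(a_i + a_j)^{(q-3)/2}]_{1≤i,j≤(q-1)/2} = (-1)^{(q+5)/4} · binom((q-3)/2, (q-3)/4) · v² in F_q, where v = ∏_{s=0}^{(q-7)/4} binom((q-3)/2, s) reduced mod p. -/

import Mathlib

open Equiv Finset

private lemma neg_one_pow_parity {M : Type*} [Monoid M] [HasDistribNeg M] {a b : ℕ}
    (h : a % 2 = b % 2) : (-1 : M) ^ a = (-1) ^ b := by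
  conv_lhs => rw [← Nat.div_add_mod a 2]
  conv_rhs => rw [← Nat.div_add_mod b 2]
  rw [h, pow_add, pow_add, pow_mul, pow_mul, neg_one_sq, one_pow, one_pow]

private lemma sign_revPerm : ∀ n : ℕ,
    Equiv.Perm.sign (Fin.revPerm : Equiv.Perm (Fin n)) = (-1) ^ (n / 2)
  | 0 => by
    have : (Fin.revPerm : Equiv.Perm (Fin 0)) = 1 := by ext x; exact x.elim0
    simp [this]
  | (n + 1) => by
    have key : (Fin.revPerm : Equiv.Perm (Fin (n+1))) * finRotate (n+1) =
        (finSuccEquivLast.symm.permCongr (Equiv.optionCongr (Fin.revPerm : Equiv.Perm (Fin n)))) := by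
      ext x
      refine Fin.lastCases ?_ (fun i => ?_) x
      · simp [Equiv.Perm.mul_apply, finRotate_last]
      · simp [Equiv.Perm.mul_apply, finRotate_succ_apply, Fin.coeSucc_eq_succ, Fin.rev_succ]
    have h1 := congrArg Equiv.Perm.sign key
    rw [map_mul, sign_finRotate, Nat.add_sub_cancel, Equiv.Perm.sign_permCongr, Equiv.optionCongr_sign,
      sign_revPerm n] at h1
    have h2 : (Fin.revPerm : Equiv.Perm (Fin (n+1))).sign * ((-1:ℤˣ) ^ n * (-1) ^ n)
        = (-1) ^ (n / 2) * (-1) ^ n := by rw [← mul_assoc, h1]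
    rw [← pow_add, ← pow_add] at h2
    have h3 : ((-1:ℤˣ)) ^ (n + n) = 1 := neg_one_pow_parity (by omega) |>.trans (pow_zero _)
    rw [h3, mul_one] at h2
    rw [h2]
    exact neg_one_pow_parity (by rcases Nat.even_or_odd n with ⟨k,rfl⟩|⟨k,rfl⟩ <;> omega)

private lemma prod_reflect_split {M : Type*} [CommMonoid M] (f : ℕ → M) (m : ℕ)
    (hf : ∀ k ≤ 2*m, f k = f (2*m - k)) :
    ∏ k ∈ range (2*m+1), f k = f m * (∏ k ∈ range m, f k)^2 := by
  have h1 : (∏ k ∈ range (m+1), f k) * ∏ k ∈ Ico (m+1) (2*m+1), f k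
      = ∏ k ∈ range (2*m+1), f k := by
    rw [range_eq_Ico, range_eq_Ico]
    exact prod_Ico_consecutive f (show 0 ≤ m+1 by omega) (show m+1 ≤ 2*m+1 by omega)
  have h2 : ∏ k ∈ Ico (m+1) (2*m+1), f k = ∏ k ∈ range m, f k := by
    rw [prod_Ico_eq_prod_range]
    have : (2*m+1) - (m+1) = m := by omega
    rw [this]
    rw [← Finset.prod_range_reflect (fun k => f k) m]
    refine Finset.prod_congr rfl fun k hk => ?_
    rw [mem_range] at hk
    rw [hf (m - 1 - k) (by omega)]
    congr 1
    omega
  rw [← h1, h2, Finset.prod_range_succ, sq]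
  simp [mul_comm, mul_assoc, mul_left_comm]

open Polynomial in
private lemma prod_X_sub_C_eq {F : Type*} [Field F] {n : ℕ} (hn : n ≠ 0) (a : Fin n → F)
    (ha : Function.Injective a) (h1 : ∀ i, a i ^ n = 1) :
    ∏ i, (X - C (a i)) = X ^ n - 1 := by
  have hmq : (X ^ n - 1 : F[X]).Monic := by
    simpa using monic_X_pow_sub_C (1 : F) hn
  have hq0 : (X ^ n - 1 : F[X]) ≠ 0 := hmq.ne_zero
  have hs : (Finset.univ.val.map a) ≤ (X ^ n - 1 : F[X]).roots := by
    refine Multiset.le_iff_subset (Multiset.Nodup.map ha Finset.univ.nodup) |>.2 ?_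
    intro x hx
    obtain ⟨i, _, rfl⟩ := Multiset.mem_map.1 hx
    rw [mem_roots hq0]
    simp [IsRoot, h1 i]
  have hdvd : ∏ i, (X - C (a i)) ∣ (X ^ n - 1 : F[X]) := by
    have := (Multiset.prod_X_sub_C_dvd_iff_le_roots hq0 (Finset.univ.val.map a)).2 hs
    rwa [Multiset.map_map, ← Finset.prod_eq_multiset_prod] at this
  have hmp : (∏ i, (X - C (a i)) : F[X]).Monic :=
    monic_prod_of_monic _ _ fun i _ => monic_X_sub_C _
  have hdeg : (X ^ n - 1 : F[X]).natDegree ≤ (∏ i, (X - C (a i)) : F[X]).natDegree := by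
    rw [natDegree_prod_of_monic _ _ fun i _ => monic_X_sub_C _]
    simp [natDegree_X_sub_C]
    rw [show (1 : F[X]) = C 1 by simp, natDegree_X_pow_sub_C]
  exact (eq_of_monic_of_dvd_of_natDegree_le hmp hmq hdvd hdeg).symm

open Polynomial in
private lemma prod_compl_node {F : Type*} [Field F] {n : ℕ} (a : Fin n → F)
    (hP : ∏ j, (X - C (a j)) = X ^ n - 1) (i : Fin n) (h1 : a i ^ n = 1) :
    ∏ j ∈ ({i}ᶜ : Finset (Fin n)), (a i - a j) = (n : F) * a i ^ (n-1) := by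
  have hPQ : (X - C (a i)) * ∏ j ∈ ({i}ᶜ : Finset (Fin n)), (X - C (a j)) = X ^ n - 1 := by
    rw [← hP, ← Finset.prod_mul_prod_compl {i} (fun j => (X - C (a j)))]
    simp
  have hG : (∑ k ∈ Finset.range n, X ^ k * (C (a i)) ^ (n-1-k)) * (X - C (a i))
      = X ^ n - 1 := by
    rw [geom_sum₂_mul, ← C_pow, h1, map_one]
  have hQG : ∏ j ∈ ({i}ᶜ : Finset (Fin n)), (X - C (a j))
      = ∑ k ∈ Finset.range n, X ^ k * (C (a i)) ^ (n-1-k) := by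
    apply mul_left_cancel₀ (X_sub_C_ne_zero (a i))
    rw [hPQ, ← hG, mul_comm]
  have := congrArg (eval (a i)) hQG
  rw [eval_prod, eval_finset_sum] at this
  simp only [eval_sub, eval_X, eval_C, eval_mul, eval_pow] at this
  rw [this]
  have hconst : ∀ k ∈ Finset.range n, a i ^ k * a i ^ (n-1-k) = a i ^ (n-1) := by
    intro k hk
    rw [Finset.mem_range] at hk
    rw [← pow_add]
    congr 1
    omega
  rw [Finset.sum_congr rfl hconst, Finset.sum_const, Finset.card_range, nsmul_eq_mul]

private theorem aux_det (F : Type*) [Field F] [Fintype F] (q m n : ℕ)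
    (hq : Fintype.card F = q) (hqm : q = 4 * m + 3) (hm : 1 ≤ m)
    (hn : n = 2 * m + 1)
    (a : Fin n → F) (ha : Function.Injective a)
    (han0 : ∀ i, a i ≠ 0) (hroot : ∀ i, a i ^ n = 1) :
    Matrix.det (Matrix.of fun i j : Fin n => (a i + a j) ^ (2 * m))
      = (-1) ^ ((q + 5) / 4) * ((2 * m).choose m : F) *
        (∏ s ∈ Finset.range m, ((2 * m).choose s : F)) ^ 2 := by
  classical
  have hq0 : (q : F) = 0 := by rw [← hq]; exact FiniteField.cast_card_eq_zero F
  have char2 : ringChar F ≠ 2 := by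
    intro h
    have := FiniteField.even_card_of_char_two (F := F) h
    omega
  have two_ne : (2 : F) ≠ 0 := Ring.two_ne_zero char2
  have hP : ∏ j, (Polynomial.X - Polynomial.C (a j)) = Polynomial.X ^ n - 1 :=
    prod_X_sub_C_eq (by omega) a ha hroot
  -- product of all a i is 1
  have hprod_a : ∏ i, a i = 1 := by
    have h0 := congrArg (Polynomial.eval 0) hP
    rw [Polynomial.eval_prod] at h0
    simp only [Polynomial.eval_sub, Polynomial.eval_X, Polynomial.eval_C,
      Polynomial.eval_pow, Polynomial.eval_one, zero_sub,
      zero_pow (show n ≠ 0 by omega)] at h0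
    have h1 : ∏ x : Fin n, -a x = (-1 : F) ^ n * ∏ x, a x := by
      calc ∏ x : Fin n, -a x = ∏ x : Fin n, (-1 : F) * a x := by simp
        _ = (∏ _x : Fin n, (-1 : F)) * ∏ x, a x := Finset.prod_mul_distrib
        _ = (-1 : F) ^ n * ∏ x, a x := by
            rw [Finset.prod_const, Finset.card_univ, Fintype.card_fin]
    have hoddn : Odd n := ⟨m, hn⟩
    rw [h1, Odd.neg_one_pow hoddn, neg_one_mul, neg_inj] at h0
    exact h0
  -- per-row product
  have hrow : ∀ i, ∏ j ∈ ({i}ᶜ : Finset (Fin n)), (a j - a i) = (n : F) * a i ^ (n - 1) := by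
    intro i
    rw [← prod_compl_node a hP i (hroot i)]
    have hcard : ({i}ᶜ : Finset (Fin n)).card = 2 * m := by
      rw [Finset.card_compl, Finset.card_singleton, Fintype.card_fin]; omega
    calc ∏ j ∈ ({i}ᶜ : Finset (Fin n)), (a j - a i)
        = ∏ j ∈ ({i}ᶜ : Finset (Fin n)), (-1 : F) * (a i - a j) := by
          refine Finset.prod_congr rfl fun j _ => by ring
      _ = (-1 : F) ^ (2 * m) * ∏ j ∈ ({i}ᶜ : Finset (Fin n)), (a i - a j) := by
          rw [Finset.prod_mul_distrib, Finset.prod_const, hcard]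
      _ = ∏ j ∈ ({i}ᶜ : Finset (Fin n)), (a i - a j) := by
          rw [Even.neg_one_pow ⟨m, by ring⟩, one_mul]
  -- the big off-diagonal product
  have hPi : ∏ i, ∏ j ∈ ({i}ᶜ : Finset (Fin n)), (a j - a i) = (n : F) ^ n := by
    rw [Finset.prod_congr rfl fun i _ => hrow i, Finset.prod_mul_distrib,
      Finset.prod_const, Finset.prod_pow, hprod_a, one_pow, mul_one,
      Finset.card_univ, Fintype.card_fin]
  -- n^n = the sign
  have hnn : (n : F) ^ n = (-1) ^ ((q + 5) / 4) := by
    have h2n : (2 : F) * n = -1 := by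
      have e1 : ((2 * n : ℕ) : F) = (q : F) - 1 := by
        rw [show 2 * n = q - 1 from by omega, Nat.cast_sub (show 1 ≤ q by omega), Nat.cast_one]
      push_cast at e1
      rw [e1, hq0, zero_sub]
    have hmulpow : (2 : F) ^ n * (n : F) ^ n = -1 := by
      rw [← mul_pow, h2n, Odd.neg_one_pow ⟨m, hn⟩]
    have hcd2 : Fintype.card F / 2 = n := by rw [hq]; omega
    have h8 : q % 8 = 3 ∨ q % 8 = 7 := by omega
    rcases h8 with h8 | h8
    · have hns : ¬ IsSquare (2 : F) := by
        rw [FiniteField.isSquare_two_iff, hq]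
        simp [h8]
      have h21 : (2 : F) ^ n ≠ 1 := by
        rw [← hcd2]
        exact fun h => hns ((FiniteField.isSquare_iff char2 two_ne).2 h)
      have h2d := FiniteField.pow_dichotomy char2 two_ne
      rw [hcd2] at h2d
      have h2v : (2 : F) ^ n = -1 := h2d.resolve_left h21
      rw [h2v, neg_one_mul, neg_inj] at hmulpow
      rw [hmulpow]
      have heven : Even ((q + 5) / 4) := by
        obtain ⟨k, hk⟩ : ∃ k, q = 8 * k + 3 := ⟨q / 8, by omega⟩
        exact ⟨(q + 5) / 8, by omega⟩
      exact (Even.neg_one_pow heven).symm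
    · have hs : IsSquare (2 : F) := by
        rw [FiniteField.isSquare_two_iff, hq]
        omega
      have h2v : (2 : F) ^ n = 1 := by
        rw [← hcd2]
        exact (FiniteField.isSquare_iff char2 two_ne).1 hs
      rw [h2v, one_mul] at hmulpow
      rw [hmulpow]
      have hodd : Odd ((q + 5) / 4) := by
        obtain ⟨k, hk⟩ : ∃ k, q = 8 * k + 7 := ⟨q / 8, by omega⟩
        exact ⟨(q + 1) / 8, by omega⟩
      exact (Odd.neg_one_pow hodd).symm
  -- matrix factorization
  have hfact : (Matrix.of fun i j : Fin n => (a i + a j) ^ (2 * m)) =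
      (Matrix.vandermonde a * Matrix.diagonal (fun k : Fin n => ((2 * m).choose (k : ℕ) : F))) *
        (Matrix.of fun k j : Fin n => a j ^ (2 * m - (k : ℕ))) := by
    ext i j
    rw [Matrix.mul_apply]
    have hterm : ∀ k : Fin n,
        (Matrix.vandermonde a * Matrix.diagonal (fun k : Fin n => ((2 * m).choose (k : ℕ) : F))) i k *
          (Matrix.of fun k j : Fin n => a j ^ (2 * m - (k : ℕ))) k j
        = a i ^ (k : ℕ) * a j ^ (2 * m - (k : ℕ)) * ((2 * m).choose (k : ℕ) : F) := by
      intro k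
      rw [Matrix.mul_diagonal, Matrix.vandermonde_apply, Matrix.of_apply]
      ring
    rw [Finset.sum_congr rfl fun k _ => hterm k,
      Fin.sum_univ_eq_sum_range (fun k => a i ^ k * a j ^ (2 * m - k) * ((2 * m).choose k : F)) n,
      show Finset.range n = Finset.range (2 * m + 1) from by rw [hn], Matrix.of_apply, add_pow]
  -- determinant of the reversed Vandermonde factor
  have hdetB : (Matrix.of fun k j : Fin n => a j ^ (2 * m - (k : ℕ))).det
      = ((-1 : F)) ^ m * (Matrix.vandermonde a).det := by
    have hB : (Matrix.of fun k j : Fin n => a j ^ (2 * m - (k : ℕ)))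
        = ((Matrix.vandermonde a).transpose.submatrix (⇑(Fin.revPerm : Equiv.Perm (Fin n))) id) := by
      ext k j
      simp only [Matrix.of_apply, Matrix.submatrix_apply, Matrix.transpose_apply,
        Matrix.vandermonde_apply, id_eq, Fin.revPerm_apply, Fin.val_rev]
      congr 1
      omega
    rw [hB, Matrix.det_permute, Matrix.det_transpose, sign_revPerm,
      show n / 2 = m from by omega]
    norm_cast
  -- the square of the Vandermonde determinant
  have key : (∏ i, ∏ j ∈ Finset.Ioi i, ((a j - a i) * (a i - a j))) = (n : F) ^ n := by
    refine (Finset.prod_prod_Ioi_mul_eq_prod_prod_off_diag (fun x y : Fin n => a x - a y)).trans ?_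
    rw [← hPi]
  have hsum : ∑ i : Fin n, (Finset.Ioi i).card = m * (2 * m + 1) := by
    have e1 : ∑ i : Fin n, (Finset.Ioi i).card = ∑ k ∈ Finset.range n, (n - 1 - k) := by
      rw [← Fin.sum_univ_eq_sum_range (fun k => n - 1 - k) n]
      exact Finset.sum_congr rfl fun i _ => Fin.card_Ioi i
    rw [e1, Finset.sum_range_reflect (fun k => k) n, Finset.sum_range_id]
    have e2 : n * (n - 1) = 2 * (m * (2 * m + 1)) := by
      rw [hn]; simp only [Nat.add_sub_cancel]; ring
    rw [e2, Nat.mul_div_cancel_left _ (by norm_num)]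
  set V := ∏ i, ∏ j ∈ Finset.Ioi i, (a j - a i) with hV
  have lhs_eq : (∏ i, ∏ j ∈ Finset.Ioi i, ((a j - a i) * (a i - a j)))
      = ((-1 : F) ^ m) * (V * V) := by
    calc (∏ i, ∏ j ∈ Finset.Ioi i, ((a j - a i) * (a i - a j)))
        = ∏ i, ∏ j ∈ Finset.Ioi i, ((-1 : F) * ((a j - a i) * (a j - a i))) :=
          Finset.prod_congr rfl fun i _ => Finset.prod_congr rfl fun j _ => by ring
      _ = ∏ i, ((-1 : F) ^ (Finset.Ioi i).card *
            ∏ j ∈ Finset.Ioi i, ((a j - a i) * (a j - a i))) :=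
          Finset.prod_congr rfl fun i _ => by
            rw [Finset.prod_mul_distrib, Finset.prod_const]
      _ = (∏ i : Fin n, (-1 : F) ^ (Finset.Ioi i).card) *
            ∏ i, ∏ j ∈ Finset.Ioi i, ((a j - a i) * (a j - a i)) := Finset.prod_mul_distrib
      _ = ((-1 : F) ^ m) * (V * V) := by
          rw [Finset.prod_pow_eq_pow_sum, hsum, mul_comm m, pow_mul,
            Odd.neg_one_pow ⟨m, rfl⟩]
          congr 1
          rw [hV, ← Finset.prod_mul_distrib]
          exact Finset.prod_congr rfl fun i _ => Finset.prod_mul_distrib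
  rw [lhs_eq] at key
  -- assemble
  rw [hfact, Matrix.det_mul, Matrix.det_mul, Matrix.det_diagonal, hdetB,
    Matrix.det_vandermonde, ← hV]
  have hchoose : (∏ k : Fin n, ((2 * m).choose (k : ℕ) : F))
      = ((2 * m).choose m : F) * (∏ s ∈ Finset.range m, ((2 * m).choose s : F)) ^ 2 := by
    rw [show (∏ k : Fin n, ((2 * m).choose (k : ℕ) : F))
        = ∏ k ∈ Finset.range n, ((2 * m).choose k : F) from
      Fin.prod_univ_eq_prod_range (fun k => ((2 * m).choose k : F)) n,
      show Finset.range n = Finset.range (2 * m + 1) from by rw [hn]]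
    exact prod_reflect_split (fun k => ((2 * m).choose k : F)) m fun k hk => by
      show ((2 * m).choose k : F) = ((2 * m).choose (2 * m - k) : F)
      rw [Nat.choose_symm hk]
  calc V * (∏ k : Fin n, ((2 * m).choose (k : ℕ) : F)) * ((-1 : F) ^ m * V)
      = (∏ k : Fin n, ((2 * m).choose (k : ℕ) : F)) * ((-1 : F) ^ m * (V * V)) := by ring
    _ = (∏ k : Fin n, ((2 * m).choose (k : ℕ) : F)) * (n : F) ^ n := by rw [key]
    _ = (-1) ^ ((q + 5) / 4) * ((2 * m).choose m : F) *
        (∏ s ∈ Finset.range m, ((2 * m).choose s : F)) ^ 2 := by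
        rw [hnn, hchoose]; ring

theorem stmt_9 (F : Type*) [Field F] [Fintype F] (q : ℕ)
    (hq : Fintype.card F = q) (h4 : q % 4 = 3) (hq3 : 3 < q)
    (a : Fin ((q - 1) / 2) → F) (ha : Function.Injective a)
    (hsq : ∀ x : F, (∃ i, a i = x) ↔ x ≠ 0 ∧ ∃ y : F, y ^ 2 = x) :
    Matrix.det (Matrix.of fun i j : Fin ((q - 1) / 2) => (a i + a j) ^ ((q - 3) / 2))
      = (-1) ^ ((q + 5) / 4) * (Nat.choose ((q - 3) / 2) ((q - 3) / 4) : F) *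
        (∏ s ∈ Finset.range ((q - 7) / 4 + 1), (Nat.choose ((q - 3) / 2) s : F)) ^ 2 := by
  have hq7 : 7 ≤ q := by omega
  have han0 : ∀ i, a i ≠ 0 := fun i => ((hsq (a i)).1 ⟨i, rfl⟩).1
  have hroot : ∀ i, a i ^ ((q - 1) / 2) = 1 := by
    intro i
    obtain ⟨h0, y, hy⟩ := (hsq (a i)).1 ⟨i, rfl⟩
    have hy0 : y ≠ 0 := by rintro rfl; simp at hy; exact h0 hy.symm
    rw [← hy, ← pow_mul, show 2 * ((q - 1) / 2) = q - 1 from by omega, ← hq]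
    exact FiniteField.pow_card_sub_one_eq_one y hy0
  have h := aux_det F q ((q - 3) / 4) ((q - 1) / 2) hq (by omega) (by omega) (by omega)
    a ha han0 hroot
  rw [show (q - 3) / 2 = 2 * ((q - 3) / 4) from by omega,
    show (q - 7) / 4 + 1 = (q - 3) / 4 from by omega]
  exact h
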